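/- Let P be a leaderless population protocol with n states and a single input variable x such that every state is coverable (for every q ∈ Q there exist i ∈ ℕ and a configuration C with IC(i) →* C and C(q) > 0). Then there exist a finite sequence σ of transitions of length at most 3^n and a 1-saturated configuration C such that IC(3^n) →σ C. -/

import Mathlib

/-- A population protocol `(Q, T, L, X, I, O)`: `T` is a finite set of transitions, each a pair
of size-2 multisets over the states `Q`, such that every size-2 multiset is the left-hand side
of some transition; `L` is the leader multiset, `I` the input mapping and `O` the output
mapping. -/
structure PopulationProtocol (Q X : Type) where
  T : Finset (Multiset Q × Multiset Q)
  pre_card : ∀ t ∈ T, Multiset.card t.1 = 2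
  post_card : ∀ t ∈ T, Multiset.card t.2 = 2
  total : ∀ p q : Q, ∃ t ∈ T, t.1 = {p, q}
  L : Multiset Q
  I : X → Q
  O : Q → Bool

namespace PopulationProtocol

variable {Q X : Type} [DecidableEq Q]

/-- A configuration is a multiset of states with at least two elements. -/
def IsConfig (C : Multiset Q) : Prop := 2 ≤ Multiset.card C

/-- One step: some transition `t` enabled at `C` (i.e. `t.1 ≤ C`) fires. -/
def Step (P : PopulationProtocol Q X) (C C' : Multiset Q) : Prop :=
  ∃ t ∈ P.T, t.1 ≤ C ∧ C' = C - t.1 + t.2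

/-- Reachability `C →* C'` via a finite sequence of transitions. -/
def Reach (P : PopulationProtocol Q X) : Multiset Q → Multiset Q → Prop :=
  Relation.ReflTransGen P.Step

/-- Firing a given transition `t`. -/
def StepT (P : PopulationProtocol Q X) (t : Multiset Q × Multiset Q)
    (C C' : Multiset Q) : Prop :=
  t ∈ P.T ∧ t.1 ≤ C ∧ C' = C - t.1 + t.2

/-- `C →σ C'`: successive firing of the transitions in the finite sequence `σ`. -/
def FireSeq (P : PopulationProtocol Q X) :
    List (Multiset Q × Multiset Q) → Multiset Q → Multiset Q → Prop
  | [], C, C' => C' = C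
  | t :: σ, C, C' => ∃ D, P.StepT t C D ∧ P.FireSeq σ D C'

/-- The output of a configuration is `b` if all states populated by it have output `b`. -/
def Output (P : PopulationProtocol Q X) (C : Multiset Q) (b : Bool) : Prop :=
  ∀ q ∈ C, P.O q = b

/-- A configuration is `b`-stable if every configuration reachable from it has output `b`. -/
def Stable (P : PopulationProtocol Q X) (b : Bool) (C : Multiset Q) : Prop :=
  IsConfig C ∧ ∀ C', P.Reach C C' → P.Output C' b

/-- The set `S = S₀ ∪ S₁` of stable configurations. -/
def StableSet (P : PopulationProtocol Q X) (C : Multiset Q) : Prop :=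
  P.Stable false C ∨ P.Stable true C

/-- The initial configuration `IC(v) = L + Σ_x v(x)·I(x)` for an input `v`. -/
def IC [Fintype X] (P : PopulationProtocol Q X) (v : X → ℕ) : Multiset Q :=
  P.L + ∑ x : X, Multiset.replicate (v x) (P.I x)

/-- An execution: an infinite sequence of configurations, each step firing a transition. -/
def IsExecution (P : PopulationProtocol Q X) (σ : ℕ → Multiset Q) : Prop :=
  ∀ i, P.Step (σ i) (σ (i + 1))

/-- Fairness: a configuration reachable from infinitely many `σ i` occurs infinitely often. -/
def Fair (P : PopulationProtocol Q X) (σ : ℕ → Multiset Q) : Prop :=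
  ∀ C : Multiset Q, (∀ N, ∃ i, N ≤ i ∧ P.Reach (σ i) C) → ∀ N, ∃ i, N ≤ i ∧ σ i = C

/-- The output of an execution is `b` if from some index on every configuration has output `b`. -/
def OutputOf (P : PopulationProtocol Q X) (σ : ℕ → Multiset Q) (b : Bool) : Prop :=
  ∃ N, ∀ i, N ≤ i → P.Output (σ i) b

/-- The protocol computes `φ` if for every input `v` (of size at least 2) every fair execution
from `IC(v)` has output `φ(v)`. -/
def Computes [Fintype X] (P : PopulationProtocol Q X) (φ : (X → ℕ) → Bool) : Prop :=
  ∀ v : X → ℕ, 2 ≤ ∑ x : X, v x →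
    ∀ σ : ℕ → Multiset Q, P.IsExecution σ → P.Fair σ → σ 0 = P.IC v → P.OutputOf σ (φ v)

/-- `(B, S)` is a basis element of a set `𝒞` of configurations if `B + ℕ^S ⊆ 𝒞`. -/
def IsBasisElement (𝒞 : Multiset Q → Prop) (B : Multiset Q) (S : Finset Q) : Prop :=
  ∀ D : Multiset Q, (∀ q ∈ D, q ∈ S) → 𝒞 (B + D)

/-- A (finite) basis of a set `𝒞` of configurations: `𝒞 = ⋃_{(B,S)∈ℬ} (B + ℕ^S)`. -/
def IsBasis (𝒞 : Multiset Q → Prop) (ℬ : Finset (Multiset Q × Finset Q)) : Prop :=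
  ∀ C : Multiset Q, 𝒞 C ↔ ∃ p ∈ ℬ, ∃ D : Multiset Q, (∀ q ∈ D, q ∈ p.2) ∧ C = p.1 + D

/-- `‖B‖∞`, the maximal multiplicity of a state in `B`. -/
def normInf [Fintype Q] (B : Multiset Q) : ℕ := Finset.univ.sup fun q => B.count q

/-- The displacement `Δ(t) = p' + q' − p − q ∈ ℤ^Q` of a transition `t = (p,q ↦ p',q')`. -/
def displ (t : Multiset Q × Multiset Q) (q : Q) : ℤ :=
  (Multiset.count q t.2 : ℤ) - (Multiset.count q t.1 : ℤ)

/-- The displacement of a multiset `π` of transitions. -/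
def displM (π : Multiset (Multiset Q × Multiset Q)) (q : Q) : ℤ :=
  (π.map fun t => displ t q).sum

/-- `C' = C + Δ(π)` (as vectors in `ℤ^Q`). -/
def AddDispl (C : Multiset Q) (π : Multiset (Multiset Q × Multiset Q))
    (C' : Multiset Q) : Prop :=
  ∀ q : Q, (Multiset.count q C' : ℤ) = (Multiset.count q C : ℤ) + displM π q

/-- A multiset `π ∈ ℕ^T` of transitions is potentially realisable if `IC(i) + Δ(π) ∈ ℕ^Q`
for some input `i`. (Leaderless, single input variable.) -/
def PotReal (P : PopulationProtocol Q Unit)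
    (π : Multiset (Multiset Q × Multiset Q)) : Prop :=
  (∀ t ∈ π, t ∈ P.T) ∧ ∃ i : ℕ, ∃ C : Multiset Q, AddDispl (P.IC fun _ => i) π C

/-- A configuration is `j`-saturated if every state is populated by at least `j` agents. -/
def Saturated (j : ℕ) (C : Multiset Q) : Prop := ∀ q : Q, j ≤ Multiset.count q C

/-- `C` is `(1/k)`-concentrated in `S`: `k·C(Q∖S) ≤ |C|`. -/
def ConcInv (k : ℕ) (S : Finset Q) (C : Multiset Q) : Prop :=
  k * Multiset.card (C.filter fun q => q ∉ S) ≤ Multiset.card C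

end PopulationProtocol

open PopulationProtocol

section Aux

variable {Q : Type} [DecidableEq Q]

/-- Closure of the initial state under transitions. -/
inductive Cov (P : PopulationProtocol Q Unit) : Q → Prop
  | base : Cov P (P.I ())
  | step (t : Multiset Q × Multiset Q) (ht : t ∈ P.T) (hpre : ∀ r ∈ t.1, Cov P r)
      {q : Q} (hq : q ∈ t.2) : Cov P q

lemma ic_eq (P : PopulationProtocol Q Unit) (hL : P.L = 0) (i : ℕ) :
    (P.IC fun _ => i) = Multiset.replicate i (P.I ()) := by
  simp [PopulationProtocol.IC, hL]

lemma fireSeq_add (P : PopulationProtocol Q Unit) (σ : List (Multiset Q × Multiset Q))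
    {A B : Multiset Q} (D : Multiset Q) (h : P.FireSeq σ A B) :
    P.FireSeq σ (A + D) (B + D) := by
  induction σ generalizing A with
  | nil =>
      simp only [PopulationProtocol.FireSeq] at h ⊢
      rw [h]
  | cons t σ ih =>
      obtain ⟨E, ⟨ht, hle, hE⟩, hrest⟩ := h
      refine ⟨E + D, ⟨ht, le_trans hle (Multiset.le_add_right _ _), ?_⟩, ih hrest⟩
      subst hE
      ext q
      have hc : Multiset.count q t.1 ≤ Multiset.count q A := Multiset.count_le_of_le q hle
      simp only [Multiset.count_add, Multiset.count_sub]
      omega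

lemma fireSeq_append (P : PopulationProtocol Q Unit)
    (σ τ : List (Multiset Q × Multiset Q)) {A B C : Multiset Q}
    (h1 : P.FireSeq σ A B) (h2 : P.FireSeq τ B C) :
    P.FireSeq (σ ++ τ) A C := by
  induction σ generalizing A with
  | nil =>
      simp only [PopulationProtocol.FireSeq] at h1
      subst h1
      simpa using h2
  | cons t σ ih =>
      obtain ⟨E, hstep, hrest⟩ := h1
      exact ⟨E, hstep, ih hrest⟩

lemma fireSeq_congr (P : PopulationProtocol Q Unit) (σ : List (Multiset Q × Multiset Q))
    {A A' B B' : Multiset Q} (hA : A = A') (hB : B = B') (h : P.FireSeq σ A B) :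
    P.FireSeq σ A' B' := hA ▸ hB ▸ h

lemma reach_cov (P : PopulationProtocol Q Unit) (hL : P.L = 0) (i : ℕ)
    {C : Multiset Q} (h : P.Reach (P.IC fun _ => i) C) : ∀ q ∈ C, Cov P q := by
  induction h with
  | refl =>
      intro q hq
      rw [ic_eq P hL] at hq
      rw [Multiset.eq_of_mem_replicate hq]
      exact Cov.base
  | tail _ hstep ih =>
      rename_i B C' _
      obtain ⟨t, ht, hle, hC'⟩ := hstep
      intro q hq
      subst hC'
      rcases Multiset.mem_add.1 hq with h1 | h2
      · exact ih q (Multiset.mem_of_le (Multiset.sub_le_self _ _) h1)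
      · exact Cov.step t ht (fun r hr => ih r (Multiset.mem_of_le hle hr)) h2

variable [Fintype Q]

/-- The saturation invariant for a set `S` of states. -/
def SatSet (P : PopulationProtocol Q Unit) (S : Finset Q) : Prop :=
  ∃ σ : List (Multiset Q × Multiset Q), ∃ C : Multiset Q,
    σ.length < 3 ^ (S.card - 1) ∧
    P.FireSeq σ (P.IC fun _ => 3 ^ (S.card - 1)) C ∧
    ∀ q ∈ S, 1 ≤ C.count q

lemma satSet_insert (P : PopulationProtocol Q Unit) (hL : P.L = 0) {S : Finset Q}
    (hS : P.I () ∈ S) {t : Multiset Q × Multiset Q} (ht : t ∈ P.T)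
    (hpre : ∀ r ∈ t.1, r ∈ S) {q' : Q} (hq' : q' ∈ t.2) (hnot : q' ∉ S)
    (h : SatSet P S) : SatSet P (insert q' S) := by
  obtain ⟨σ, C, hlen, hfire, hcount⟩ := h
  set k := S.card with hk
  have hk1 : 1 ≤ k := Finset.card_pos.2 ⟨_, hS⟩
  have hcard : (insert q' S).card - 1 = k := by
    rw [Finset.card_insert_of_notMem hnot]
    omega
  set N : ℕ := 3 ^ (k - 1) with hN
  set R : Multiset Q := Multiset.replicate N (P.I ()) with hR
  have hICN : (P.IC fun _ => N) = R := ic_eq P hL N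
  -- fire σ three times
  have h1 : P.FireSeq σ (R + (R + R)) (C + (R + R)) := by
    refine fireSeq_add P σ (R + R) ?_
    rw [← hICN]; exact hfire
  have h2 : P.FireSeq σ (C + (R + R)) (C + C + R) := by
    have := fireSeq_add P σ (C + R) (hICN ▸ hfire)
    refine fireSeq_congr P σ ?_ ?_ this <;>
      · ext q; simp only [Multiset.count_add]; ring
  have h3 : P.FireSeq σ (C + C + R) (C + C + C) := by
    have := fireSeq_add P σ (C + C) (hICN ▸ hfire)
    refine fireSeq_congr P σ ?_ ?_ this <;>
      · ext q; simp only [Multiset.count_add]; ring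
  -- counts in C + C + C
  have hCCC : ∀ q ∈ S, 3 ≤ Multiset.count q (C + C + C) := by
    intro q hq
    have := hcount q hq
    simp only [Multiset.count_add]
    omega
  have hle3 : t.1 ≤ C + C + C := by
    rw [Multiset.le_iff_count]
    intro q
    by_cases hq : q ∈ t.1
    · have h2' : Multiset.count q t.1 ≤ 2 := by
        have := Multiset.count_le_card q t.1
        rw [P.pre_card t ht] at this
        exact this
      exact le_trans h2' (by have := hCCC q (hpre q hq); omega)
    · simp [Multiset.count_eq_zero_of_notMem hq]
  set C' : Multiset Q := C + C + C - t.1 + t.2 with hC'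
  have h4 : P.FireSeq [t] (C + C + C) C' := ⟨C', ⟨ht, hle3, rfl⟩, rfl⟩
  refine ⟨σ ++ σ ++ σ ++ [t], C', ?_, ?_, ?_⟩
  · simp only [List.length_append, List.length_cons, List.length_nil]
    have h3k : (3:ℕ) ^ k = 3 * 3 ^ (k - 1) := by
      rw [← pow_succ']
      congr 1
      omega
    rw [hcard]
    omega
  · rw [hcard]
    have hIC3 : (P.IC fun _ => 3 ^ k) = R + (R + R) := by
      rw [ic_eq P hL, hR]
      have : (3:ℕ) ^ k = N + (N + N) := by
        have : (3:ℕ) ^ k = 3 * 3 ^ (k - 1) := by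
          rw [← pow_succ']; congr 1; omega
        omega
      rw [this, ← Multiset.replicate_add, ← Multiset.replicate_add]
    rw [hIC3]
    exact fireSeq_append P _ _ (fireSeq_append P _ _ (fireSeq_append P _ _ h1 h2) h3) h4
  · intro q hq
    have hcnt : Multiset.count q C' =
        Multiset.count q (C + C + C) - Multiset.count q t.1 + Multiset.count q t.2 := by
      rw [hC', Multiset.count_add, Multiset.count_sub]
    have hpre2 : Multiset.count q t.1 ≤ 2 := by
      have := Multiset.count_le_card q t.1
      rw [P.pre_card t ht] at this
      exact this
    rcases Finset.mem_insert.1 hq with rfl | hqS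
    · have : 1 ≤ Multiset.count q t.2 := Multiset.one_le_count_iff_mem.2 hq'
      omega
    · have := hCCC q hqS
      omega

lemma satSet_univ (P : PopulationProtocol Q Unit) (hL : P.L = 0)
    (hcov : ∀ q : Q, Cov P q) (hS0 : P.I () ∈ (Finset.univ : Finset Q)) :
    ∀ j : ℕ, ∀ S : Finset Q, (Finset.univ \ S).card = j → P.I () ∈ S →
      SatSet P S → SatSet P (Finset.univ : Finset Q) := by
  intro j
  induction j with
  | zero =>
      intro S hj _ hsat
      have hsdiff : Finset.univ \ S = ∅ := Finset.card_eq_zero.1 hj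
      have hSu : S = Finset.univ := Finset.eq_univ_of_forall fun q => by
        by_contra hq
        have hmem : q ∈ Finset.univ \ S := Finset.mem_sdiff.2 ⟨Finset.mem_univ q, hq⟩
        rw [hsdiff] at hmem
        simp at hmem
      rwa [hSu] at hsat
  | succ j ih =>
      intro S hj hS0' hsat
      -- find a transition leaving S
      by_cases hstep : ∃ t ∈ P.T, (∀ r ∈ t.1, r ∈ S) ∧ ∃ q' ∈ t.2, q' ∉ S
      · obtain ⟨t, ht, hpre, q', hq', hnot⟩ := hstep
        have hj' : (Finset.univ \ insert q' S).card = j := by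
          have h1 : (Finset.univ \ S).card = Fintype.card Q - S.card :=
            by rw [Finset.card_sdiff_of_subset (Finset.subset_univ S), Finset.card_univ]
          have h2 : (Finset.univ \ insert q' S).card = Fintype.card Q - (S.card + 1) := by
            rw [Finset.card_sdiff_of_subset (Finset.subset_univ _), Finset.card_univ,
              Finset.card_insert_of_notMem hnot]
          have h3 : S.card + 1 ≤ Fintype.card Q := by
            rw [← Finset.card_insert_of_notMem hnot, ← Finset.card_univ]
            exact Finset.card_le_card (Finset.subset_univ _)
          omega
        exact ih (insert q' S) hj' (Finset.mem_insert_of_mem hS0')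
          (satSet_insert P hL hS0' ht hpre hq' hnot hsat)
      · exfalso
        push_neg at hstep
        have hclosed : ∀ q : Q, Cov P q → q ∈ S := by
          intro q hq
          induction hq with
          | base => exact hS0'
          | step t ht hpre hq2 ih2 => exact hstep t ht ih2 _ hq2
        have : Finset.univ \ S = ∅ := by
          ext q
          simp only [Finset.mem_sdiff, Finset.mem_univ, true_and, Finset.notMem_empty,
            iff_false, not_not]
          exact hclosed q (hcov q)
        rw [this] at hj
        simp at hj

end Aux

/-- for a leaderless protocol with `n` states in which every state is
coverable, `IC(3^n)` reaches a `1`-saturated configuration via a sequence of length at most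
`3^n`. -/
theorem reach_saturated {Q : Type} [DecidableEq Q] [Fintype Q]
    (P : PopulationProtocol Q Unit) (hL : P.L = 0) (n : ℕ) (hn : Fintype.card Q = n)
    (hcov : ∀ q : Q, ∃ i : ℕ, ∃ C : Multiset Q, P.Reach (P.IC fun _ => i) C ∧ q ∈ C) :
    ∃ σ : List (Multiset Q × Multiset Q), ∃ C : Multiset Q,
      σ.length ≤ 3 ^ n ∧ P.FireSeq σ (P.IC fun _ => 3 ^ n) C ∧ Saturated 1 C := by
  rcases Nat.eq_zero_or_pos n with hn0 | hn1
  · -- Q is empty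
    subst hn0
    have hempty : IsEmpty Q := Fintype.card_eq_zero_iff.1 hn
    refine ⟨[], P.IC fun _ => 3 ^ 0, by simp, rfl, fun q => (hempty.false q).elim⟩
  · -- all states are in the closure
    have hcovall : ∀ q : Q, Cov P q := by
      intro q
      obtain ⟨i, C, hreach, hq⟩ := hcov q
      exact reach_cov P hL i hreach q hq
    set q0 : Q := P.I () with hq0
    -- base case: SatSet for {q0}
    have hbase : SatSet P ({q0} : Finset Q) := by
      refine ⟨[], P.IC fun _ => 3 ^ (({q0} : Finset Q).card - 1), ?_, rfl, ?_⟩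
      · simp
      · intro q hq
        rw [Finset.mem_singleton] at hq
        subst hq
        rw [ic_eq P hL]
        simp [Finset.card_singleton, hq0]
    have huniv : SatSet P (Finset.univ : Finset Q) :=
      satSet_univ P hL hcovall (Finset.mem_univ q0)
        (Finset.univ \ {q0}).card ({q0} : Finset Q) rfl (Finset.mem_singleton_self q0) hbase
    obtain ⟨σ, C, hlen, hfire, hcount⟩ := huniv
    rw [Finset.card_univ, hn] at hlen hfire
    -- pad with extra agents
    have hle : 3 ^ (n - 1) ≤ 3 ^ n := Nat.pow_le_pow_right (by norm_num) (Nat.sub_le n 1)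
    set D : Multiset Q := Multiset.replicate (3 ^ n - 3 ^ (n - 1)) q0 with hD
    have hpad : P.FireSeq σ (P.IC fun _ => 3 ^ n) (C + D) := by
      have h1 : P.FireSeq σ ((P.IC fun _ => 3 ^ (n - 1)) + D) (C + D) :=
        fireSeq_add P σ D hfire
      refine fireSeq_congr P σ ?_ rfl h1
      rw [ic_eq P hL, ic_eq P hL, hD, ← Multiset.replicate_add]
      congr 1
      omega
    refine ⟨σ, C + D, ?_, hpad, ?_⟩
    · have : σ.length < 3 ^ (n - 1) := hlen
      omega
    · intro q
      have := hcount q (Finset.mem_univ q)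
      rw [Multiset.count_add]
      omega
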